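/- Let A be an M×N partial sign matrix and let d ≥ 1. If the sign-rank of A is at most d, then there exists a continuous map f from the crosspolytope realization |S(A)| to ℝ^d such that ‖f(x)‖ = 1 for all x ∈ |S(A)| and f(−x) = −f(x) whenever x and −x both lie in |S(A)|; i.e., there is a ℤ₂-equivariant continuous map |S(A)| → S^{d−1}, so ind_{ℤ₂}(S(A)) ≤ srank(A) − 1. -/

import Mathlib

open scoped RealInnerProductSpace Pointwise

/-- The realized simplex of row `i` of the partial sign matrix `A`:
the convex hull of `{e_j : A i j = 1} ∪ {-e_j : A i j = -1}`. -/
noncomputable def rowSimplex {M N : ℕ} (A : Fin M → Fin N → ℤ) (i : Fin M) :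
    Set (Fin N → ℝ) :=
  convexHull ℝ
    ({x | ∃ j, A i j = 1 ∧ x = Pi.single j (1 : ℝ)} ∪
     {x | ∃ j, A i j = -1 ∧ x = -Pi.single j (1 : ℝ)})

/-- The crosspolytope realization `|S(A)|` of the sign complex of `A`. -/
noncomputable def signComplexReal {M N : ℕ} (A : Fin M → Fin N → ℤ) :
    Set (Fin N → ℝ) :=
  ⋃ i, (rowSimplex A i ∪ -(rowSimplex A i))

/-- If the sign-rank of `A` is at most `d`, then there is a ℤ₂-equivariant
continuous map `|S(A)| → S^{d-1}`, i.e. `ind_{ℤ₂}(S(A)) ≤ srank(A) - 1`. -/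
theorem index_le_srank {M N : ℕ} (d : ℕ) (hd : 1 ≤ d)
    (A : Fin M → Fin N → ℤ)
    (hA : ∀ i j, A i j = -1 ∨ A i j = 0 ∨ A i j = 1)
    (hrank : ∃ (u : Fin M → EuclideanSpace ℝ (Fin d))
        (v : Fin N → EuclideanSpace ℝ (Fin d)),
      ∀ i j, A i j ≠ 0 → 0 < (A i j : ℝ) * ⟪u i, v j⟫) :
    ∃ f : (Fin N → ℝ) → EuclideanSpace ℝ (Fin d),
      ContinuousOn f (signComplexReal A) ∧
      (∀ x ∈ signComplexReal A, ‖f x‖ = 1) ∧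
      (∀ x, x ∈ signComplexReal A → -x ∈ signComplexReal A → f (-x) = -f x) := by
  obtain ⟨u, v, huv⟩ := hrank
  -- the linear map `x ↦ ∑ j, x j • v j`
  set V : (Fin N → ℝ) → EuclideanSpace ℝ (Fin d) :=
    fun x => ∑ j, x j • v j with hV
  have hVneg : ∀ x, V (-x) = -V x := by
    intro x
    simp [hV, neg_smul, Finset.sum_neg_distrib]
  have hVcont : Continuous V := by
    apply continuous_finset_sum
    intro j _
    exact (continuous_apply j).smul continuous_const
  have hinner : ∀ (i : Fin M) (x : Fin N → ℝ),
      ⟪u i, V x⟫ = ∑ j, x j * ⟪u i, v j⟫ := by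
    intro i x
    simp only [hV, inner_sum, real_inner_smul_right]
  -- positivity of `⟪u i, V x⟫` on `rowSimplex A i`
  have hpos : ∀ (i : Fin M), ∀ x ∈ rowSimplex A i, 0 < ⟪u i, V x⟫ := by
    intro i x hx
    have hconv : Convex ℝ {y : Fin N → ℝ | 0 < ∑ j, y j * ⟪u i, v j⟫} := by
      apply convex_halfSpace_gt
      constructor
      · intro a b
        simp [add_mul, Finset.sum_add_distrib]
      · intro c a
        simp [Finset.mul_sum, mul_assoc]
    have hsub : ({x | ∃ j, A i j = 1 ∧ x = Pi.single j (1 : ℝ)} ∪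
        {x | ∃ j, A i j = -1 ∧ x = -Pi.single j (1 : ℝ)}) ⊆
        {y : Fin N → ℝ | 0 < ∑ j, y j * ⟪u i, v j⟫} := by
      have hg1 : ∀ j : Fin N,
          (∑ j', (Pi.single j (1:ℝ) : Fin N → ℝ) j' * ⟪u i, v j'⟫) = ⟪u i, v j⟫ := by
        intro j
        simp [Pi.single_apply, ite_mul, Finset.sum_ite_eq']
      rintro y (⟨j, hj, rfl⟩ | ⟨j, hj, rfl⟩)
      · have h := huv i j (by simp [hj])
        rw [hj] at h
        push_cast at h
        rw [Set.mem_setOf_eq, hg1]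
        linarith
      · have h := huv i j (by simp [hj])
        rw [hj] at h
        push_cast at h
        have hneg : (∑ j', (-(Pi.single j (1:ℝ) : Fin N → ℝ)) j' * ⟪u i, v j'⟫)
            = -(∑ j', (Pi.single j (1:ℝ) : Fin N → ℝ) j' * ⟪u i, v j'⟫) := by
          simp [neg_mul, Finset.sum_neg_distrib]
        rw [Set.mem_setOf_eq, hneg, hg1]
        linarith
    have := convexHull_min hsub hconv hx
    rwa [hinner]
  have hVne : ∀ x ∈ signComplexReal A, V x ≠ 0 := by
    intro x hx
    simp only [signComplexReal, Set.mem_iUnion, Set.mem_union, Set.mem_neg] at hx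
    obtain ⟨i, hx | hx⟩ := hx
    · intro h0
      have := hpos i x hx
      rw [h0] at this
      simp at this
    · intro h0
      have := hpos i (-x) hx
      rw [hVneg, h0] at this
      simp at this
  refine ⟨fun x => ‖V x‖⁻¹ • V x, ?_, ?_, ?_⟩
  · apply ContinuousOn.smul (f := fun x => ‖V x‖⁻¹) _ hVcont.continuousOn
    apply ContinuousOn.inv₀ (hVcont.norm.continuousOn)
    intro x hx
    exact norm_ne_zero_iff.mpr (hVne x hx)
  · intro x hx
    rw [norm_smul]
    have h := norm_ne_zero_iff.mpr (hVne x hx)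
    simp [abs_of_nonneg (inv_nonneg.mpr (norm_nonneg _)), inv_mul_cancel₀ h]
  · intro x hx hnx
    show ‖V (-x)‖⁻¹ • V (-x) = -(‖V x‖⁻¹ • V x)
    rw [hVneg]
    simp [smul_neg]
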